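/- Let Ψ∈ℝ^{p×p} be symmetric and let S=diag(s_1,…,s_p) with s_k≤0 for all k. Let Λ̲=diag(α̲_1,…,α̲_p) with α̲_k>0, and suppose Q := Ψ + Λ̲⁻¹ S Λ̲⁻¹ is positive definite. Then for every diagonal matrix H=diag(η_1,…,η_p) with η_k ≥ α̲_k for all k, both HΨH + S and HΨH are positive definite. -/

import Mathlib

open Matrix

/-- if `Q := Ψ + Λ̲⁻¹ S Λ̲⁻¹ ≻ 0` with `Ψ` symmetric, `S`
diagonal with nonpositive entries and `Λ̲` diagonal with positive entries,
then for every diagonal `H = diag(η)` with `η_k ≥ α̲_k` both `HΨH + S` and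
`HΨH` are positive definite. -/
theorem stmt_9 {p : ℕ} (Ψ : Matrix (Fin p) (Fin p) ℝ) (hΨ : Ψ.IsSymm)
    (s αlo η : Fin p → ℝ)
    (hs : ∀ k, s k ≤ 0) (hαlo : ∀ k, 0 < αlo k) (hη : ∀ k, αlo k ≤ η k)
    (hQ : (Ψ + (diagonal αlo)⁻¹ * diagonal s * (diagonal αlo)⁻¹).PosDef) :
    (diagonal η * Ψ * diagonal η + diagonal s).PosDef ∧
      (diagonal η * Ψ * diagonal η).PosDef := by
  have hη0 : ∀ k, 0 < η k := fun k => lt_of_lt_of_le (hαlo k) (hη k)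
  have hΨh : Ψ.IsHermitian := by
    rw [Matrix.IsHermitian, conjTranspose]
    ext i j
    simpa using hΨ.apply i j
  have hHerm : (diagonal η * Ψ * diagonal η).IsHermitian := by
    have := Matrix.isHermitian_mul_mul_conjTranspose (diagonal η) hΨh
    simpa [conjTranspose, diagonal_transpose] using this
  have hDinv : (diagonal αlo)⁻¹ = diagonal (fun k => (αlo k)⁻¹) := by
    apply Matrix.inv_eq_right_inv
    rw [diagonal_mul_diagonal, ← diagonal_one]
    have : (fun i => αlo i * (αlo i)⁻¹) = fun _ : Fin p => 1 :=
      funext fun k => mul_inv_cancel₀ (ne_of_gt (hαlo k))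
    rw [this]
  -- main quadratic form inequality, for nonzero x
  have main : ∀ x : Fin p → ℝ, x ≠ 0 →
      0 < x ⬝ᵥ ((diagonal η * Ψ * diagonal η + diagonal s) *ᵥ x) := by
    intro x hx
    set y : Fin p → ℝ := fun k => η k * x k with hy
    have hy0 : y ≠ 0 := by
      intro h
      apply hx
      funext k
      have := congrFun h k
      simp only [hy, Pi.zero_apply] at this
      rcases mul_eq_zero.mp this with h' | h'
      · exact absurd h' (ne_of_gt (hη0 k))
      · simpa using h'
    have hQy := hQ.dotProduct_mulVec_pos hy0
    simp only [star_trivial] at hQy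
    have hQform : y ⬝ᵥ ((Ψ + (diagonal αlo)⁻¹ * diagonal s * (diagonal αlo)⁻¹) *ᵥ y)
        = y ⬝ᵥ (Ψ *ᵥ y) + ∑ k, s k * ((αlo k)⁻¹ * y k)^2 := by
      rw [hDinv]
      simp only [add_mulVec, dotProduct_add, ← mulVec_mulVec]
      congr 1
      simp only [dotProduct, mulVec_diagonal]
      apply Finset.sum_congr rfl
      intro k _
      ring
    have hform : x ⬝ᵥ ((diagonal η * Ψ * diagonal η + diagonal s) *ᵥ x)
        = y ⬝ᵥ (Ψ *ᵥ y) + ∑ k, s k * (x k)^2 := by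
      have hdx : diagonal η *ᵥ x = y := by
        funext k
        simp [mulVec_diagonal, hy]
      have hdot : ∀ w : Fin p → ℝ, x ⬝ᵥ (diagonal η *ᵥ w) = y ⬝ᵥ w := by
        intro w
        simp only [dotProduct, mulVec_diagonal, hy]
        apply Finset.sum_congr rfl
        intro k _
        ring
      simp only [add_mulVec, dotProduct_add, ← mulVec_mulVec, hdx, hdot]
      congr 1
      simp only [dotProduct, mulVec_diagonal]
      apply Finset.sum_congr rfl
      intro k _
      ring
    rw [hform]
    rw [hQform] at hQy
    have hineq : ∑ k, s k * ((αlo k)⁻¹ * y k)^2 ≤ ∑ k, s k * (x k)^2 := by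
      apply Finset.sum_le_sum
      intro k _
      apply mul_le_mul_of_nonpos_left _ (hs k)
      have h1 : (1:ℝ) ≤ (αlo k)⁻¹ * η k := by
        rw [← div_eq_inv_mul]
        exact (one_le_div (hαlo k)).mpr (hη k)
      have h2 : (1:ℝ) ≤ ((αlo k)⁻¹ * η k)^2 := by nlinarith
      have h3 : (αlo k)⁻¹ * y k = ((αlo k)⁻¹ * η k) * x k := by
        simp only [hy]; ring
      rw [h3, mul_pow]
      nlinarith [sq_nonneg (x k)]
    linarith
  have h1 : (diagonal η * Ψ * diagonal η + diagonal s).PosDef := by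
    refine Matrix.PosDef.of_dotProduct_mulVec_pos (hHerm.add (isHermitian_diagonal s)) fun x hx => by simpa using main x hx
  refine ⟨h1, Matrix.PosDef.of_dotProduct_mulVec_pos hHerm fun x hx => ?_⟩
  have hmain := main x hx
  simp only [star_trivial]
  have hsx : ∑ k, s k * (x k)^2 ≤ 0 :=
    Finset.sum_nonpos fun k _ => mul_nonpos_of_nonpos_of_nonneg (hs k) (sq_nonneg _)
  have hsplit : x ⬝ᵥ ((diagonal η * Ψ * diagonal η + diagonal s) *ᵥ x)
      = x ⬝ᵥ ((diagonal η * Ψ * diagonal η) *ᵥ x) + ∑ k, s k * (x k)^2 := by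
    rw [add_mulVec, dotProduct_add]
    congr 1
    simp only [dotProduct, mulVec_diagonal]
    apply Finset.sum_congr rfl
    intro k _
    ring
  rw [hsplit] at hmain
  linarith
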